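/- Let A, B ∈ ℝ^{n×n} with det A > 0 and det B > 0, and let S(M) = √(MᵀM). Then dist(A·B⁻¹, SO(n)) ≤ c(n) · |(S(A) − S(B))·B⁻¹|_F for a dimensional constant c(n), where dist denotes Frobenius-norm distance to SO(n). -/

import Mathlib

open Matrix MeasureTheory

noncomputable def msqrt {n : ℕ} (A : Matrix (Fin n) (Fin n) ℝ) : Matrix (Fin n) (Fin n) ℝ :=
  (Matrix.posSemidef_conjTranspose_mul_self A).1.eigenvectorUnitary.1 *
    diagonal ((↑) ∘ (Real.sqrt ∘ (Matrix.posSemidef_conjTranspose_mul_self A).1.eigenvalues)) *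
    (star (Matrix.posSemidef_conjTranspose_mul_self A).1.eigenvectorUnitary : Matrix (Fin n) (Fin n) ℝ)

noncomputable def frobNorm {n : ℕ} (A : Matrix (Fin n) (Fin n) ℝ) : ℝ :=
  Real.sqrt (∑ i, ∑ j, (A i j) ^ 2)

noncomputable def opNorm {n : ℕ} (A : Matrix (Fin n) (Fin n) ℝ) : ℝ :=
  ‖Matrix.toEuclideanCLM (𝕜 := ℝ) A‖

noncomputable def sLam {n : ℕ} (A : Matrix (Fin n) (Fin n) ℝ) : ℝ :=
  sInf {y | ∃ v : EuclideanSpace ℝ (Fin n), ‖v‖ = 1 ∧ y = ‖Matrix.toEuclideanCLM (𝕜 := ℝ) A v‖}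

lemma aux_frob_sq_eq_trace {n : ℕ} (M : Matrix (Fin n) (Fin n) ℝ) :
    ∑ i, ∑ j, (M i j) ^ 2 = (Mᵀ * M).trace := by
  rw [Matrix.trace]
  simp only [Matrix.diag_apply, Matrix.mul_apply, Matrix.transpose_apply, sq]
  rw [Finset.sum_comm]

lemma aux_frob_orth_mul {n : ℕ} (Q M : Matrix (Fin n) (Fin n) ℝ) (hQ : Qᵀ * Q = 1) :
    frobNorm (Q * M) = frobNorm M := by
  unfold frobNorm
  rw [aux_frob_sq_eq_trace, aux_frob_sq_eq_trace]
  have h : (Q * M)ᵀ * (Q * M) = Mᵀ * M := by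
    rw [Matrix.transpose_mul, Matrix.mul_assoc, ← Matrix.mul_assoc Qᵀ, hQ,
      Matrix.one_mul]
  rw [h]

lemma aux_det_nonneg {n : ℕ} {A : Matrix (Fin n) (Fin n) ℝ} (hA : A.PosSemidef) :
    0 ≤ A.det := by
  rw [hA.1.det_eq_prod_eigenvalues]
  exact Finset.prod_nonneg fun i _ => by simpa using hA.eigenvalues_nonneg i

lemma aux_msqrt_psd {n : ℕ} (X : Matrix (Fin n) (Fin n) ℝ) : (msqrt X).PosSemidef := by
  unfold msqrt
  rw [star_eq_conjTranspose]
  apply PosSemidef.mul_mul_conjTranspose_same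
  rw [posSemidef_diagonal_iff]
  intro i
  simp [Real.sqrt_nonneg]

lemma aux_msqrt_mul_self {n : ℕ} (X : Matrix (Fin n) (Fin n) ℝ) :
    msqrt X * msqrt X = Xᵀ * X := by
  rw [← Matrix.conjTranspose_eq_transpose_of_trivial X]
  have hP := Matrix.posSemidef_conjTranspose_mul_self X
  conv_rhs => rw [hP.1.spectral_theorem, Unitary.conjStarAlgAut_apply]
  unfold msqrt
  have hu := Unitary.coe_star_mul_self hP.1.eigenvectorUnitary
  have e : ∀ (U D E V : Matrix (Fin n) (Fin n) ℝ),
      U * D * V * (U * E * V) = U * (D * (V * U) * E) * V := by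
    intros; simp only [Matrix.mul_assoc]
  rw [e, hu, Matrix.mul_one, diagonal_mul_diagonal]
  congr 3
  funext i
  simp only [Function.comp_apply]
  exact Real.mul_self_sqrt (hP.eigenvalues_nonneg i)

lemma aux_msqrt_symm {n : ℕ} (X : Matrix (Fin n) (Fin n) ℝ) :
    (msqrt X)ᵀ = msqrt X := by
  have := (aux_msqrt_psd X).1
  rw [Matrix.IsHermitian, Matrix.conjTranspose_eq_transpose_of_trivial] at this
  exact this

lemma aux_msqrt_det {n : ℕ} (X : Matrix (Fin n) (Fin n) ℝ) (hX : 0 < X.det) :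
    (msqrt X).det = X.det := by
  have h1 : (msqrt X).det * (msqrt X).det = X.det * X.det := by
    rw [← Matrix.det_mul, aux_msqrt_mul_self, Matrix.det_mul, Matrix.det_transpose]
  have h2 : 0 ≤ (msqrt X).det :=
    aux_det_nonneg (aux_msqrt_psd X)
  nlinarith

/-- Quantitative distance of A·B⁻¹ to SO(n) in terms of (S(A) − S(B))·B⁻¹. -/
theorem stmt_7 (n : ℕ) :
    ∃ c : ℝ, 0 < c ∧
      ∀ A B : Matrix (Fin n) (Fin n) ℝ, 0 < A.det → 0 < B.det →
        sInf {d : ℝ | ∃ R : Matrix (Fin n) (Fin n) ℝ,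
            (Rᵀ * R = 1 ∧ R.det = 1) ∧ d = frobNorm (A * B⁻¹ - R)}
          ≤ c * frobNorm ((msqrt A - msqrt B) * B⁻¹) := by
  refine ⟨1, one_pos, fun A B hA hB => ?_⟩
  have hAne : A.det ≠ 0 := ne_of_gt hA
  have hBne : B.det ≠ 0 := ne_of_gt hB
  set SA := msqrt A with hSAdef
  set SB := msqrt B with hSBdef
  have hsqA : SA * SA = Aᵀ * A := aux_msqrt_mul_self A
  have hsqB : SB * SB = Bᵀ * B := aux_msqrt_mul_self B
  have hsymA : SAᵀ = SA := aux_msqrt_symm A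
  have hsymB : SBᵀ = SB := aux_msqrt_symm B
  have hdA : SA.det = A.det := aux_msqrt_det A hA
  have hdB : SB.det = B.det := aux_msqrt_det B hB
  clear_value SA SB
  clear hSAdef hSBdef
  have hSAu : IsUnit SA.det := (hdA ▸ hAne : SA.det ≠ 0).isUnit
  have hSBu : IsUnit SB.det := (hdB ▸ hBne : SB.det ≠ 0).isUnit
  have hSAinv : SA * SA⁻¹ = 1 := Matrix.mul_nonsing_inv _ hSAu
  have hSAinv' : SA⁻¹ * SA = 1 := Matrix.nonsing_inv_mul _ hSAu
  have hSBinv : SB * SB⁻¹ = 1 := Matrix.mul_nonsing_inv _ hSBu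
  have hSBinv' : SB⁻¹ * SB = 1 := Matrix.nonsing_inv_mul _ hSBu
  set QA : Matrix (Fin n) (Fin n) ℝ := A * SA⁻¹ with hQA
  set QB : Matrix (Fin n) (Fin n) ℝ := B * SB⁻¹ with hQB
  have hinvTA : (SA⁻¹)ᵀ = SA⁻¹ := by rw [Matrix.transpose_nonsing_inv, hsymA]
  have hinvTB : (SB⁻¹)ᵀ = SB⁻¹ := by rw [Matrix.transpose_nonsing_inv, hsymB]
  have hQAorth : QAᵀ * QA = 1 := by
    rw [hQA, Matrix.transpose_mul, hinvTA]
    have e1 : SA⁻¹ * Aᵀ * (A * SA⁻¹) = SA⁻¹ * (Aᵀ * A) * SA⁻¹ := by noncomm_ring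
    rw [e1, ← hsqA, ← Matrix.mul_assoc, hSAinv', Matrix.one_mul, hSAinv]
  have hQBorth : QBᵀ * QB = 1 := by
    rw [hQB, Matrix.transpose_mul, hinvTB]
    have e1 : SB⁻¹ * Bᵀ * (B * SB⁻¹) = SB⁻¹ * (Bᵀ * B) * SB⁻¹ := by noncomm_ring
    rw [e1, ← hsqB, ← Matrix.mul_assoc, hSBinv', Matrix.one_mul, hSBinv]
  have hQAdet : QA.det = 1 := by
    rw [hQA, Matrix.det_mul, Matrix.det_nonsing_inv, hdA, Ring.inverse_eq_inv]
    field_simp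
  have hQBdet : QB.det = 1 := by
    rw [hQB, Matrix.det_mul, Matrix.det_nonsing_inv, hdB, Ring.inverse_eq_inv]
    field_simp
  have hQBT : QBᵀ = SB * B⁻¹ := by
    have hSBB : SB * B⁻¹ = SB⁻¹ * Bᵀ := by
      have h : SB * (SB * B⁻¹) = SB * (SB⁻¹ * Bᵀ) := by
        rw [← Matrix.mul_assoc, hsqB, ← Matrix.mul_assoc SB, hSBinv, Matrix.one_mul,
          Matrix.mul_assoc, Matrix.mul_nonsing_inv _ hBne.isUnit, Matrix.mul_one]
      calc SB * B⁻¹ = (SB⁻¹ * SB) * (SB * B⁻¹) := by rw [hSBinv', Matrix.one_mul]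
        _ = SB⁻¹ * (SB * (SB⁻¹ * Bᵀ)) := by rw [Matrix.mul_assoc, h]
        _ = (SB⁻¹ * SB) * (SB⁻¹ * Bᵀ) := by rw [Matrix.mul_assoc]
        _ = SB⁻¹ * Bᵀ := by rw [hSBinv', Matrix.one_mul]
    rw [hQB, Matrix.transpose_mul, hinvTB, hSBB]
  clear_value QA QB
  have hQBorth' : QB * QBᵀ = 1 := mul_eq_one_comm.mp hQBorth
  set R : Matrix (Fin n) (Fin n) ℝ := QA * QBᵀ with hR
  have hRorth : Rᵀ * R = 1 := by
    rw [hR, Matrix.transpose_mul, Matrix.transpose_transpose]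
    have e1 : QB * QAᵀ * (QA * QBᵀ) = QB * (QAᵀ * QA) * QBᵀ := by noncomm_ring
    rw [e1, hQAorth, Matrix.mul_one, hQBorth']
  have hRdet : R.det = 1 := by
    rw [hR, Matrix.det_mul, hQAdet, Matrix.det_transpose, hQBdet, one_mul]
  have hkey : A * B⁻¹ - R = QA * ((SA - SB) * B⁻¹) := by
    have hQASA : QA * SA = A := by
      rw [hQA, Matrix.mul_assoc, hSAinv', Matrix.mul_one]
    rw [hR, hQBT, Matrix.sub_mul, Matrix.mul_sub, ← Matrix.mul_assoc, ← Matrix.mul_assoc,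
      hQASA, Matrix.mul_assoc QA SB]
  have hmem : frobNorm ((SA - SB) * B⁻¹) ∈
      {d : ℝ | ∃ R : Matrix (Fin n) (Fin n) ℝ,
        (Rᵀ * R = 1 ∧ R.det = 1) ∧ d = frobNorm (A * B⁻¹ - R)} :=
    ⟨R, ⟨hRorth, hRdet⟩, by rw [hkey, aux_frob_orth_mul _ _ hQAorth]⟩
  have hbdd : BddBelow {d : ℝ | ∃ R : Matrix (Fin n) (Fin n) ℝ,
      (Rᵀ * R = 1 ∧ R.det = 1) ∧ d = frobNorm (A * B⁻¹ - R)} := by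
    refine ⟨0, fun d hd => ?_⟩
    obtain ⟨R', _, rfl⟩ := hd
    exact Real.sqrt_nonneg _
  rw [one_mul]
  exact csInf_le hbdd hmem
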